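/- In the associative graded algebra generated over C by degree-1 elements x^+_1, x^+_2, x^-_1, x^-_2 with relations x^+_i x^+_j = 0, x^-_i x^-_j = 0 (all i,j ∈ {1,2}), x^+_1 x^-_2 + x^+_2 x^-_1 = 0, and x^-_1 x^+_2 + x^-_2 x^+_1 = 0, the degree-n homogeneous component has dimension 2(n+1) for every n ≥ 1 (and dimension 1 in degree 0 for each of the two idempotent components, i.e., total dimension 2 in degree 0). -/

import Mathlib

noncomputable section

/-- Generators of the Ext algebra: two vertex idempotents `e v` and the
degree-one generators `x^+_i` (`xp i`) and `x^-_i` (`xm i`), `i ∈ {1,2}`. -/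
inductive ExtGen | e (v : Bool) | xp (i : Fin 2) | xm (i : Fin 2)

open FreeAlgebra in
/-- Defining relations: the `e v` are orthogonal idempotents summing to `1`,
`x^+` are arrows from vertex `false` to `true` and `x^-` arrows back, products
of two `x^+`'s and of two `x^-`'s vanish, and the two anticommutation relations
`x^+_1x^-_2 + x^+_2x^-_1 = 0`, `x^-_1x^+_2 + x^-_2x^+_1 = 0` hold. -/
inductive ExtRel : FreeAlgebra ℂ ExtGen → FreeAlgebra ℂ ExtGen → Prop
  | idem (v) : ExtRel (ι ℂ (ExtGen.e v) * ι ℂ (ExtGen.e v)) (ι ℂ (ExtGen.e v))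
  | orth (v w) (h : v ≠ w) : ExtRel (ι ℂ (ExtGen.e v) * ι ℂ (ExtGen.e w)) 0
  | sum : ExtRel (ι ℂ (ExtGen.e false) + ι ℂ (ExtGen.e true)) 1
  | xpL (i) : ExtRel (ι ℂ (ExtGen.e true) * ι ℂ (ExtGen.xp i)) (ι ℂ (ExtGen.xp i))
  | xpR (i) : ExtRel (ι ℂ (ExtGen.xp i) * ι ℂ (ExtGen.e false)) (ι ℂ (ExtGen.xp i))
  | xmL (i) : ExtRel (ι ℂ (ExtGen.e false) * ι ℂ (ExtGen.xm i)) (ι ℂ (ExtGen.xm i))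
  | xmR (i) : ExtRel (ι ℂ (ExtGen.xm i) * ι ℂ (ExtGen.e true)) (ι ℂ (ExtGen.xm i))
  | quadP (i j) : ExtRel (ι ℂ (ExtGen.xp i) * ι ℂ (ExtGen.xp j)) 0
  | quadM (i j) : ExtRel (ι ℂ (ExtGen.xm i) * ι ℂ (ExtGen.xm j)) 0
  | antiP : ExtRel (ι ℂ (ExtGen.xp 0) * ι ℂ (ExtGen.xm 1) +
      ι ℂ (ExtGen.xp 1) * ι ℂ (ExtGen.xm 0)) 0
  | antiM : ExtRel (ι ℂ (ExtGen.xm 0) * ι ℂ (ExtGen.xp 1) +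
      ι ℂ (ExtGen.xm 1) * ι ℂ (ExtGen.xp 0)) 0

/-- The Ext algebra `Ext^•(X^+_s ⊕ X^-_{p-s}, X^+_s ⊕ X^-_{p-s})`. -/
abbrev ExtAlg : Type := RingQuot ExtRel

/-- Image of a generator in the Ext algebra. -/
def extGen (x : ExtGen) : ExtAlg := RingQuot.mkAlgHom ℂ ExtRel (FreeAlgebra.ι ℂ x)

/-- The letters of degree-one words: `inl i ↦ x^+_i`, `inr i ↦ x^-_i`. -/
def extLetter : Fin 2 ⊕ Fin 2 → ExtAlg
  | Sum.inl i => extGen (ExtGen.xp i)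
  | Sum.inr i => extGen (ExtGen.xm i)

/-- The degree-`n` homogeneous component (`n ≥ 1`): the span of length-`n`
words in the degree-one generators. -/
def extDeg (n : ℕ) : Submodule ℂ ExtAlg :=
  Submodule.span ℂ
    {u | ∃ l : List (Fin 2 ⊕ Fin 2), l.length = n ∧ u = (l.map extLetter).prod}

/-- The degree-`0` component: the span of the two idempotents. -/
def extDeg0 : Submodule ℂ ExtAlg :=
  Submodule.span ℂ {extGen (ExtGen.e false), extGen (ExtGen.e true)}

-- the model algebra
abbrev MPoly := MvPolynomial (Fin 2) ℂ
abbrev MAlg := Matrix (Fin 2) (Fin 2) MPoly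

open Matrix MvPolynomial in
def rep : ExtGen → MAlg
  | ExtGen.e true => Matrix.single 0 0 1
  | ExtGen.e false => Matrix.single 1 1 1
  | ExtGen.xp i => Matrix.single 0 1 (X i)
  | ExtGen.xm i => Matrix.single 1 0 ((if i = 1 then -1 else 1) * X i)

open Matrix in
theorem rep_rel : ∀ ⦃x y⦄, ExtRel x y →
    (FreeAlgebra.lift ℂ rep) x = (FreeAlgebra.lift ℂ rep) y := by
  intro x y h
  induction h with
  | idem v => cases v <;>
      simp [rep, Matrix.single_mul_single_same]
  | orth v w h =>
      cases v <;> cases w <;> simp_all <;>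
        simp [rep, Matrix.single_mul_single_of_ne]
  | sum =>
      simp only [map_add, _root_.map_one, FreeAlgebra.lift_ι_apply, rep]
      ext i j
      fin_cases i <;> fin_cases j <;>
        simp [Matrix.single, Matrix.one_apply]
  | xpL i => simp [rep, Matrix.single_mul_single_same]
  | xpR i => simp [rep, Matrix.single_mul_single_same]
  | xmL i => simp [rep, Matrix.single_mul_single_same]
  | xmR i => simp [rep, Matrix.single_mul_single_same]
  | quadP i j => simp [rep, Matrix.single_mul_single_of_ne]
  | quadM i j => simp [rep, Matrix.single_mul_single_of_ne]
  | antiP =>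
      simp only [map_add, _root_.map_mul, map_zero, FreeAlgebra.lift_ι_apply, rep]
      rw [Matrix.single_mul_single_same, Matrix.single_mul_single_same]
      rw [← Matrix.single_add]
      ring_nf
      simp [mul_comm]
  | antiM =>
      simp only [map_add, _root_.map_mul, map_zero, FreeAlgebra.lift_ι_apply, rep]
      rw [Matrix.single_mul_single_same, Matrix.single_mul_single_same]
      rw [← Matrix.single_add]
      ring_nf
      simp [mul_comm]

def φ : ExtAlg →ₐ[ℂ] MAlg := RingQuot.liftAlgHom ℂ ⟨FreeAlgebra.lift ℂ rep, rep_rel⟩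

theorem φ_gen (g : ExtGen) : φ (extGen g) = rep g := by
  simp [φ, extGen, RingQuot.liftAlgHom_mkAlgHom_apply]

def letter : Bool × Fin 2 → ExtAlg
  | (true, i) => extGen (ExtGen.xp i)
  | (false, i) => extGen (ExtGen.xm i)

def wrd : Bool → List (Fin 2) → ExtAlg
  | _, [] => 1
  | t, i :: s => letter (t, i) * wrd (!t) s

theorem extRel_eq {a b} (h : ExtRel a b) :
    RingQuot.mkAlgHom ℂ ExtRel a = RingQuot.mkAlgHom ℂ ExtRel b :=
  RingQuot.mkAlgHom_rel ℂ h

theorem quad (t : Bool) (i j : Fin 2) : letter (t, i) * letter (t, j) = 0 := by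
  cases t
  · have := extRel_eq (ExtRel.quadM i j)
    simpa [letter, extGen] using this
  · have := extRel_eq (ExtRel.quadP i j)
    simpa [letter, extGen] using this

theorem anti (t : Bool) :
    letter (t, 0) * letter (!t, 1) = (-1 : ℂ) • (letter (t, 1) * letter (!t, 0)) := by
  cases t
  · have := extRel_eq ExtRel.antiM
    rw [map_add, map_mul, map_mul, map_zero] at this
    simp only [letter, extGen, Bool.not_false]
    exact (eq_neg_of_add_eq_zero_left this).trans (neg_one_smul ℂ _).symm
  · have := extRel_eq ExtRel.antiP
    rw [map_add, map_mul, map_mul, map_zero] at this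
    simp only [letter, extGen, Bool.not_true]
    exact (eq_neg_of_add_eq_zero_left this).trans (neg_one_smul ℂ _).symm

theorem bubble : ∀ (k : ℕ) (t : Bool) (z : List (Fin 2)),
    letter (t, 0) * wrd (!t) (List.replicate k 1 ++ z)
      = ((-1 : ℂ) ^ k) • wrd t (List.replicate k 1 ++ (0 :: z)) := by
  intro k
  induction k with
  | zero => intro t z; simp [wrd]
  | succ k ih =>
    intro t z
    rw [List.replicate_succ, List.cons_append, List.cons_append]
    show letter (t, 0) * (letter (!t, 1) * wrd (!(!t)) _)
      = _ • (letter (t, 1) * wrd (!t) _)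
    rw [← mul_assoc, anti t, Bool.not_not]
    have h2 := ih (!t) z
    rw [Bool.not_not] at h2
    rw [smul_mul_assoc, mul_assoc, h2, mul_smul_comm, smul_smul, pow_succ]
    module

/-- `k` ones followed by `m` zeros. -/
def can (k m : ℕ) : List (Fin 2) := List.replicate k 1 ++ List.replicate m 0

theorem can_length (k m : ℕ) : (can k m).length = k + m := by simp [can]

def v (n : ℕ) : Bool × Fin (n + 1) → ExtAlg :=
  fun p => wrd p.1 (can p.2 (n - p.2))

theorem mem_v (n k m : ℕ) (h : k + m = n) (t : Bool) :
    wrd t (can k m) ∈ Set.range (v n) := by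
  refine ⟨(t, ⟨k, by omega⟩), ?_⟩
  simp only [v]
  congr 2
  omega

theorem can_cons (k m : ℕ) (h : ¬(k = 0 ∧ m = 0)) :
    ∃ j s, can k m = j :: s := by
  cases k with
  | zero =>
    cases m with
    | zero => exact absurd ⟨rfl, rfl⟩ h
    | succ m => exact ⟨0, can 0 m, by simp [can, List.replicate_succ]⟩
  | succ k => exact ⟨1, can k m, by simp [can, List.replicate_succ]⟩

theorem gen_step (t t' : Bool) (i : Fin 2) (k m : ℕ) :
    letter (t, i) * wrd t' (can k m)
      ∈ Submodule.span ℂ (Set.range (v (k + m + 1))) := by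
  by_cases h0 : k = 0 ∧ m = 0
  · obtain ⟨rfl, rfl⟩ := h0
    have : wrd t' (can 0 0) = 1 := by simp [can, wrd]
    rw [this, mul_one]
    have : letter (t, i) = wrd t [i] := by simp [wrd]
    rw [this]
    fin_cases i
    · exact Submodule.subset_span (mem_v 1 0 1 rfl t)
    · exact Submodule.subset_span (mem_v 1 1 0 rfl t)
  · obtain ⟨j, s, hcan⟩ := can_cons k m h0
    by_cases ht : t' = t
    · subst ht
      rw [hcan]
      show letter (t', i) * (letter (t', j) * wrd (!t') s) ∈ _
      rw [← mul_assoc, quad, zero_mul]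
      exact Submodule.zero_mem _
    · have ht' : t' = !t := by cases t <;> cases t' <;> simp_all
      subst ht'
      fin_cases i
      · rw [show ((⟨0, by omega⟩ : Fin 2)) = (0 : Fin 2) from rfl]
        rw [show can k m = List.replicate k 1 ++ List.replicate m 0 from rfl]
        rw [bubble k t (List.replicate m 0)]
        refine Submodule.smul_mem _ _ (Submodule.subset_span ?_)
        have : (List.replicate k 1 ++ 0 :: List.replicate m 0 : List (Fin 2))
            = can k (m + 1) := by simp [can, List.replicate_succ]
        rw [this]
        exact mem_v (k + m + 1) k (m + 1) (by omega) t
      · rw [show ((⟨1, by omega⟩ : Fin 2)) = (1 : Fin 2) from rfl]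
        have : letter (t, 1) * wrd (!t) (can k m) = wrd t (1 :: can k m) := rfl
        rw [this, show (1 :: can k m : List (Fin 2)) = can (k + 1) m from by
          simp [can, List.replicate_succ]]
        exact Submodule.subset_span (mem_v (k + m + 1) (k + 1) m (by omega) t)

theorem words_mem (l : List (Bool × Fin 2)) :
    (l.map letter).prod ∈ Submodule.span ℂ (Set.range (v l.length)) := by
  induction l with
  | nil =>
    refine Submodule.subset_span ⟨(true, 0), ?_⟩
    simp [v, can, wrd]
  | cons p l ih =>
    simp only [List.map_cons, List.prod_cons, List.length_cons]
    refine Submodule.span_induction ?_ ?_ ?_ ?_ ih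
    · rintro _ ⟨⟨t', kk⟩, rfl⟩
      have h := gen_step p.1 t' p.2 kk (l.length - kk)
      rw [show (kk : ℕ) + (l.length - kk) + 1 = l.length + 1 from by
        have := kk.isLt; omega] at h
      have : letter p = letter (p.1, p.2) := by cases p; rfl
      rw [this]
      exact h
    · rw [mul_zero]; exact Submodule.zero_mem _
    · intro x y _ _ hx hy
      rw [mul_add]; exact Submodule.add_mem _ hx hy
    · intro a x _ hx
      rw [mul_smul_comm]; exact Submodule.smul_mem _ _ hx

/-- translation between letter alphabets -/
def toTB : Fin 2 ⊕ Fin 2 → Bool × Fin 2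
  | Sum.inl i => (true, i)
  | Sum.inr i => (false, i)

theorem extLetter_eq (x : Fin 2 ⊕ Fin 2) : extLetter x = letter (toTB x) := by
  cases x <;> rfl

def alt : Bool → List (Fin 2) → List (Fin 2 ⊕ Fin 2)
  | _, [] => []
  | true, i :: s => Sum.inl i :: alt false s
  | false, i :: s => Sum.inr i :: alt true s

theorem alt_length : ∀ (t : Bool) (s : List (Fin 2)), (alt t s).length = s.length := by
  intro t s
  induction s generalizing t with
  | nil => cases t <;> rfl
  | cons i s ih => cases t <;> simp [alt, ih]

theorem alt_prod : ∀ (t : Bool) (s : List (Fin 2)),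
    ((alt t s).map extLetter).prod = wrd t s := by
  intro t s
  induction s generalizing t with
  | nil => cases t <;> rfl
  | cons i s ih =>
    cases t <;> simp only [alt, List.map_cons, List.prod_cons, ih] <;> rfl

theorem extDeg_eq (n : ℕ) : extDeg n = Submodule.span ℂ (Set.range (v n)) := by
  apply le_antisymm
  · rw [extDeg, Submodule.span_le]
    rintro u ⟨l, hl, rfl⟩
    have : (l.map extLetter).prod = ((l.map toTB).map letter).prod := by
      rw [List.map_map]
      congr 1
      exact List.map_congr_left fun x _ => extLetter_eq x
    rw [this]
    have h := words_mem (l.map toTB)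
    rwa [List.length_map, hl] at h
  · rw [Submodule.span_le]
    rintro u ⟨⟨t, k⟩, rfl⟩
    refine Submodule.subset_span ⟨alt t (can k (n - k)), ?_, ?_⟩
    · rw [alt_length, can_length]
      have := k.isLt; omega
    · rw [alt_prod]; rfl

open Matrix MvPolynomial

def rrow : Bool → Fin 2 := fun t => if t then 0 else 1

def ccol (t : Bool) (m : ℕ) : Fin 2 := if m % 2 = 0 then rrow t else rrow (!t)

theorem col_succ (t : Bool) (m : ℕ) : ccol (!t) m = ccol t (m + 1) := by
  by_cases h : m % 2 = 0
  · have h2 : (m + 1) % 2 = 1 := by omega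
    simp [ccol, h, h2]
  · have h2 : (m + 1) % 2 = 0 := by omega
    simp [ccol, h, h2, Bool.not_not]

def sgn : Bool → Fin 2 → ℂ := fun t i => if t = false ∧ i = 1 then -1 else 1

theorem sgn_ne (t : Bool) (i : Fin 2) : sgn t i ≠ 0 := by
  unfold sgn; split <;> norm_num

theorem φ_letter (t : Bool) (i : Fin 2) : φ (letter (t, i)) =
    Matrix.single (rrow t) (rrow (!t)) (MvPolynomial.C (sgn t i) * MvPolynomial.X i) := by
  cases t <;> fin_cases i <;>
    simp [letter, φ_gen, rep, sgn, rrow, map_neg, _root_.map_one]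

theorem φ_wrd : ∀ (s : List (Fin 2)) (t : Bool) (i : Fin 2), ∃ ε : ℂ, ε ≠ 0 ∧
    φ (wrd t (i :: s)) = Matrix.single (rrow t) (ccol t (i :: s).length)
      (MvPolynomial.C ε * ((i :: s).map fun j => (MvPolynomial.X j : MPoly)).prod) := by
  intro s
  induction s with
  | nil =>
    intro t i
    refine ⟨sgn t i, sgn_ne t i, ?_⟩
    show φ (letter (t, i) * wrd (!t) []) = _
    rw [show wrd (!t) [] = 1 from rfl, mul_one, φ_letter]
    have h1 : ccol t [i].length = rrow (!t) := by simp [ccol]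
    rw [h1]
    simp
  | cons j s ih =>
    intro t i
    obtain ⟨ε, hε, h⟩ := ih (!t) j
    refine ⟨sgn t i * ε, mul_ne_zero (sgn_ne t i) hε, ?_⟩
    show φ (letter (t, i) * wrd (!t) (j :: s)) = _
    rw [_root_.map_mul, φ_letter, h, Matrix.single_mul_single_same]
    rw [show ccol (!t) (j :: s).length = ccol t (i :: j :: s).length from by
      simpa using col_succ t (j :: s).length]
    refine congrArg _ ?_
    simp only [List.map_cons, List.prod_cons, MvPolynomial.C_mul]
    ring

theorem φ_can (n : ℕ) (hn : 1 ≤ n) (t : Bool) (k : Fin (n + 1)) :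
    ∃ ε : ℂ, ε ≠ 0 ∧ φ (v n (t, k)) = Matrix.single (rrow t) (ccol t n)
      (MvPolynomial.C ε * (MvPolynomial.X 1 ^ (k : ℕ) * MvPolynomial.X 0 ^ (n - k))) := by
  have hk := k.isLt
  obtain ⟨j, s, hcan⟩ := can_cons k (n - k) (by omega)
  obtain ⟨ε, hε, h⟩ := φ_wrd s t j
  refine ⟨ε, hε, ?_⟩
  have hv : v n (t, k) = wrd t (j :: s) := by rw [v, hcan]
  have hlen : (j :: s).length = n := by rw [← hcan, can_length]; omega
  rw [hv, h, hlen]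
  refine congrArg _ (congrArg _ ?_)
  rw [← hcan]
  simp [can, List.map_append, List.map_replicate, List.prod_append, List.prod_replicate]

theorem rrow_ne {t t' : Bool} (h : t ≠ t') : rrow t ≠ rrow t' := by
  cases t <;> cases t' <;> simp_all [rrow]

theorem v_indep (n : ℕ) (hn : 1 ≤ n) : LinearIndependent ℂ (v n) := by
  apply LinearIndependent.of_comp φ.toLinearMap
  choose ε hε hφv using φ_can n hn
  rw [Fintype.linearIndependent_iff]
  intro g hg p
  obtain ⟨t₀, k₀⟩ := p
  set d : Fin 2 →₀ ℕ := Finsupp.single 1 (k₀ : ℕ) + Finsupp.single 0 (n - k₀) with hd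
  have key : ∀ (t : Bool) (k : Fin (n + 1)),
      MvPolynomial.coeff d ((φ.toLinearMap ∘ v n) (t, k) (rrow t₀) (ccol t₀ n))
        = if (t, k) = (t₀, k₀) then ε t₀ k₀ else 0 := by
    intro t k
    show MvPolynomial.coeff d (φ (v n (t, k)) (rrow t₀) (ccol t₀ n)) = _
    rw [hφv t k]
    by_cases ht : t = t₀
    · subst ht
      rw [Matrix.single_apply_same]
      rw [MvPolynomial.coeff_C_mul, MvPolynomial.X_pow_eq_monomial,
        MvPolynomial.X_pow_eq_monomial, MvPolynomial.monomial_mul, one_mul,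
        MvPolynomial.coeff_monomial]
      by_cases hkk : k = k₀
      · subst hkk
        simp [hd]
      · have hne : (Finsupp.single (1 : Fin 2) (k : ℕ) + Finsupp.single (0 : Fin 2) (n - k)) ≠ d := by
          intro hcontra
          have := DFunLike.congr_fun hcontra (1 : Fin 2)
          simp only [hd, Finsupp.add_apply, Finsupp.single_eq_same,
            Finsupp.single_eq_of_ne (show (1 : Fin 2) ≠ 0 by decide), add_zero] at this
          exact hkk (Fin.ext this)
        rw [if_neg hne]
        simp [Prod.ext_iff, hkk]
    · have hz : Matrix.single (rrow t) (ccol t n)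
          (MvPolynomial.C (ε t k) * (MvPolynomial.X 1 ^ (k : ℕ) * MvPolynomial.X 0 ^ (n - k)))
          (rrow t₀) (ccol t₀ n) = (0 : MPoly) :=
        Matrix.single_apply_of_ne _ _ _ _ _ (fun hc => rrow_ne ht hc.1)
      rw [hz]
      simp [Prod.ext_iff, ht]
  have hsum := congrArg (fun M : MAlg => MvPolynomial.coeff d (M (rrow t₀) (ccol t₀ n))) hg
  simp only [Matrix.sum_apply, Matrix.smul_apply, MvPolynomial.coeff_sum,
    MvPolynomial.coeff_smul, Matrix.zero_apply, MvPolynomial.coeff_zero] at hsum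
  rw [show (∑ j : Bool × Fin (n + 1),
      g j • MvPolynomial.coeff d ((φ.toLinearMap ∘ v n) j (rrow t₀) (ccol t₀ n)))
      = ∑ j : Bool × Fin (n + 1), if j = (t₀, k₀) then g j * ε t₀ k₀ else 0 from
    Finset.sum_congr rfl fun j _ => by
      obtain ⟨t, k⟩ := j
      rw [key t k, smul_eq_mul, mul_ite, mul_zero]] at hsum
  rw [Finset.sum_ite_eq' Finset.univ (t₀, k₀)
    (fun j => g j * ε t₀ k₀), if_pos (Finset.mem_univ _)] at hsum
  exact (mul_eq_zero.mp hsum).resolve_right (hε t₀ k₀)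

theorem finrank_extDeg (n : ℕ) (hn : 1 ≤ n) :
    Module.finrank ℂ (extDeg n) = 2 * (n + 1) := by
  rw [extDeg_eq, finrank_span_eq_card (v_indep n hn)]
  simp [Fintype.card_prod, mul_comm]

theorem φ_e (b : Bool) : φ (extGen (ExtGen.e b)) =
    Matrix.single (rrow b) (rrow b) (1 : MPoly) := by
  cases b <;> simp [φ_gen, rep, rrow]

theorem extGen_e_ne (b : Bool) : extGen (ExtGen.e b) ≠ 0 := by
  intro h
  have h1 := φ_e b
  rw [h, map_zero] at h1
  have h2 := congrArg (fun M : MAlg => M (rrow b) (rrow b)) h1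
  simp only [Matrix.zero_apply, Matrix.single_apply_same] at h2
  exact zero_ne_one h2

theorem w_indep : LinearIndependent ℂ (fun b : Bool => extGen (ExtGen.e b)) := by
  apply LinearIndependent.of_comp φ.toLinearMap
  rw [Fintype.linearIndependent_iff]
  intro g hg b₀
  have key : ∀ b : Bool, MvPolynomial.coeff (0 : Fin 2 →₀ ℕ)
      ((φ.toLinearMap ∘ fun b : Bool => extGen (ExtGen.e b)) b (rrow b₀) (rrow b₀))
      = if b = b₀ then 1 else 0 := by
    intro b
    show MvPolynomial.coeff _ (φ (extGen (ExtGen.e b)) (rrow b₀) (rrow b₀)) = _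
    rw [φ_e b]
    by_cases hb : b = b₀
    · subst hb
      rw [Matrix.single_apply_same, if_pos rfl]
      simp
    · have hz : Matrix.single (rrow b) (rrow b) (1 : MPoly)
          (rrow b₀) (rrow b₀) = (0 : MPoly) :=
        Matrix.single_apply_of_ne _ _ _ _ _ (fun hc => rrow_ne hb hc.1)
      rw [hz, if_neg hb]
      simp
  have hsum := congrArg
    (fun M : MAlg => MvPolynomial.coeff (0 : Fin 2 →₀ ℕ) (M (rrow b₀) (rrow b₀))) hg
  simp only [Matrix.sum_apply, Matrix.smul_apply, MvPolynomial.coeff_sum,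
    MvPolynomial.coeff_smul, Matrix.zero_apply, MvPolynomial.coeff_zero] at hsum
  rw [show (∑ b : Bool, g b • MvPolynomial.coeff (0 : Fin 2 →₀ ℕ)
      ((φ.toLinearMap ∘ fun b : Bool => extGen (ExtGen.e b)) b (rrow b₀) (rrow b₀)))
      = ∑ b : Bool, if b = b₀ then g b * 1 else 0 from
    Finset.sum_congr rfl fun b _ => by
      rw [key b, smul_eq_mul, mul_ite, mul_zero]] at hsum
  rw [Finset.sum_ite_eq' Finset.univ b₀ (fun b => g b * 1),
    if_pos (Finset.mem_univ _), mul_one] at hsum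
  exact hsum


/-- the degree-`n` component of the Ext algebra has dimension
`2(n+1)` for every `n ≥ 1`, and in degree `0` each of the two idempotent
components has dimension `1`, for a total dimension `2`. -/
theorem ext_algebra_dimensions :
    (∀ n : ℕ, 1 ≤ n → Module.finrank ℂ (extDeg n) = 2 * (n + 1)) ∧
    Module.finrank ℂ (Submodule.span ℂ {extGen (ExtGen.e false)}) = 1 ∧
    Module.finrank ℂ (Submodule.span ℂ {extGen (ExtGen.e true)}) = 1 ∧
    Module.finrank ℂ extDeg0 = 2 := by
  refine ⟨fun n hn => finrank_extDeg n hn, ?_, ?_, ?_⟩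
  · exact finrank_span_singleton (extGen_e_ne false)
  · exact finrank_span_singleton (extGen_e_ne true)
  · have hset : ({extGen (ExtGen.e false), extGen (ExtGen.e true)} : Set ExtAlg)
        = Set.range (fun b : Bool => extGen (ExtGen.e b)) := by
      ext x
      constructor
      · rintro (rfl | rfl)
        exacts [⟨false, rfl⟩, ⟨true, rfl⟩]
      · rintro ⟨b, rfl⟩
        cases b
        · exact Or.inl rfl
        · exact Or.inr rfl
    rw [extDeg0, hset, finrank_span_eq_card w_indep]
    simp
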